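/- There exists a constant C > 0 such that for every C² function g on [0,1], ∫₀¹ |g|² r dr ≤ C (∫₀¹ (1−r²)|g|² r dr)^{2/3} (∫₀¹ |(rg)'|² (1/r) dr)^{1/3} + C ∫₀¹ (1−r²)|g|² r dr. -/

import Mathlib

open MeasureTheory Set

lemma cs_aux {E M Q : ℝ} (hE : 0 ≤ E) (hM : 0 ≤ M) (hQ : 0 ≤ Q)
    (h : ∀ l : ℝ, 0 < l → 2 * E ≤ M * l + Q / l) : E ^ 2 ≤ M * Q := by
  rcases eq_or_lt_of_le hM with hM0 | hM0
  · have hE0 : E = 0 := by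
      by_contra hne
      have hEpos : 0 < E := lt_of_le_of_ne hE (Ne.symm hne)
      have h1 := h (Q / E + E) (by positivity)
      rw [← hM0] at h1
      have h2 : Q / (Q / E + E) ≤ E := by
        rw [div_le_iff₀ (by positivity)]
        have he : E * (Q / E + E) = Q + E ^ 2 := by field_simp
        nlinarith
      nlinarith
    rw [hE0]; norm_num; positivity
  · rcases eq_or_lt_of_le hQ with hQ0 | hQ0
    · have hE0 : E = 0 := by
        by_contra hne
        have hEpos : 0 < E := lt_of_le_of_ne hE (Ne.symm hne)
        have h1 := h (E / M) (by positivity)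
        rw [← hQ0] at h1
        have : 2 * E ≤ M * (E / M) := by simpa using h1
        rw [mul_div_cancel₀ _ (ne_of_gt hM0)] at this
        linarith
      rw [hE0]; norm_num; positivity
    · set t := Real.sqrt (Q / M) with ht
      have htpos : 0 < t := Real.sqrt_pos.mpr (by positivity)
      have ht2 : t ^ 2 = Q / M := Real.sq_sqrt (by positivity)
      have htQ : M * t ^ 2 = Q := by rw [ht2]; field_simp
      have hMt : M * t = Q / t := by
        rw [eq_div_iff (ne_of_gt htpos)]
        linear_combination htQ
      have h1 := h t htpos
      rw [← hMt] at h1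
      have hEle : E ≤ M * t := by linarith
      have h3 : E ^ 2 ≤ (M * t) ^ 2 := by nlinarith
      have h2 : (M * t) ^ 2 = M * Q := by
        rw [mul_pow]
        linear_combination M * htQ
      linarith [h2 ▸ h3]

lemma arith_aux {a b L : ℝ} (ha : 0 ≤ a) (hb : 0 ≤ b) (hL : 0 ≤ L)
    (h : ∀ δ : ℝ, 0 < δ → δ ≤ 1 / 2 → L ≤ a + 3 * a / δ + 4 * δ ^ 2 * b) :
    L ≤ 15 * a ^ ((2:ℝ)/3) * b ^ ((1:ℝ)/3) + 15 * a := by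
  have hX : 0 ≤ 15 * a ^ ((2:ℝ)/3) * b ^ ((1:ℝ)/3) := by positivity
  rcases eq_or_lt_of_le ha with ha0 | ha0
  · have hL0 : L ≤ 0 := by
      by_contra hne
      push_neg at hne
      set δ := min (1/2 : ℝ) (Real.sqrt (L / (8 * (b + 1)))) with hδ
      have hs : 0 < Real.sqrt (L / (8 * (b + 1))) := Real.sqrt_pos.mpr (by positivity)
      have hδpos : 0 < δ := lt_min (by norm_num) hs
      have hδle : δ ≤ 1/2 := min_le_left _ _
      have h1 := h δ hδpos hδle
      rw [← ha0] at h1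
      have h1' : L ≤ 4 * δ ^ 2 * b := by
        have : (0:ℝ) + 3 * 0 / δ + 4 * δ ^ 2 * b = 4 * δ ^ 2 * b := by ring
        linarith [this ▸ h1]
      have hδ2 : δ ^ 2 ≤ L / (8 * (b + 1)) := by
        have hle : δ ≤ Real.sqrt (L / (8 * (b + 1))) := min_le_right _ _
        calc δ ^ 2 ≤ Real.sqrt (L / (8 * (b + 1))) ^ 2 := by nlinarith
        _ = L / (8 * (b + 1)) := Real.sq_sqrt (by positivity)
      have h4 : 4 * δ ^ 2 * b ≤ 4 * (L / (8 * (b + 1))) * b := by nlinarith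
      have he : 4 * (L / (8 * (b + 1))) * b = L * b / (2 * (b + 1)) := by
        field_simp
        ring
      have hfin : L * b / (2 * (b + 1)) ≤ L / 2 := by
        rw [div_le_div_iff₀ (by positivity) (by norm_num)]
        nlinarith
      rw [he] at h4
      linarith
    linarith
  · by_cases hba : b ≤ 8 * a
    · have h1 := h (1/2) (by norm_num) le_rfl
      have h2 : L ≤ 15 * a := by
        rw [show a + 3 * a / (1/2) + 4 * (1/2:ℝ) ^ 2 * b = 7 * a + b by ring] at h1
        linarith
      linarith
    push_neg at hba
    have hbpos : 0 < b := by linarith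
    set δ := (a / b) ^ ((1:ℝ)/3) with hδdef
    have hδpos : 0 < δ := Real.rpow_pos_of_pos (by positivity) _
    have hδle : δ ≤ 1 / 2 := by
      have h8 : a / b ≤ 1/8 := by
        rw [div_le_div_iff₀ hbpos (by norm_num)]
        linarith
      calc δ ≤ (1/8 : ℝ) ^ ((1:ℝ)/3) :=
            Real.rpow_le_rpow (by positivity) h8 (by norm_num)
        _ = 1/2 := by
            rw [show (1/8 : ℝ) = (1/2 : ℝ) ^ (3:ℝ) by
                  rw [show (3:ℝ) = ((3:ℕ):ℝ) by norm_num, Real.rpow_natCast]; norm_num,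
              ← Real.rpow_mul (by norm_num)]
            norm_num
    have ha13 : a / a ^ ((1:ℝ)/3) = a ^ ((2:ℝ)/3) := by
      rw [show (2:ℝ)/3 = 1 - 1/3 by norm_num, Real.rpow_sub ha0, Real.rpow_one]
    have hb13 : b / b ^ ((2:ℝ)/3) = b ^ ((1:ℝ)/3) := by
      rw [show (1:ℝ)/3 = 1 - 2/3 by norm_num, Real.rpow_sub hbpos, Real.rpow_one]
    have key1 : a / δ = a ^ ((2:ℝ)/3) * b ^ ((1:ℝ)/3) := by
      rw [hδdef, Real.div_rpow (le_of_lt ha0) (le_of_lt hbpos), div_div_eq_mul_div,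
        mul_comm a, mul_div_assoc, ha13, mul_comm]
    have key2 : δ ^ 2 * b = a ^ ((2:ℝ)/3) * b ^ ((1:ℝ)/3) := by
      have : δ ^ 2 = (a / b) ^ ((2:ℝ)/3) := by
        rw [hδdef, ← Real.rpow_natCast ((a/b) ^ ((1:ℝ)/3)) 2, ← Real.rpow_mul (by positivity)]
        norm_num
      rw [this, Real.div_rpow (le_of_lt ha0) (le_of_lt hbpos), div_mul_eq_mul_div,
        mul_div_assoc, hb13]
    have h1 := h δ hδpos hδle
    rw [show 3 * a / δ = 3 * (a / δ) by ring, key1,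
      show 4 * δ ^ 2 * b = 4 * (δ ^ 2 * b) by ring, key2] at h1
    linarith

set_option maxHeartbeats 1000000 in
lemma key_ineq (g : ℝ → ℂ) (hg : ContDiffOn ℝ 2 g (Icc (0:ℝ) 1))
    (hbInt : IntegrableOn
      (fun r => ‖derivWithin (fun s : ℝ => (s:ℂ) * g s) (Icc (0:ℝ) 1) r‖^2 / r)
      (Ioo (0:ℝ) 1) volume)
    {δ : ℝ} (hδ0 : 0 < δ) (hδ : δ ≤ 1/2) :
    (∫ r in Ioo (0:ℝ) 1, ‖g r‖^2 * r) ≤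
      (∫ r in Ioo (0:ℝ) 1, (1 - r^2) * ‖g r‖^2 * r)
      + 3 * (∫ r in Ioo (0:ℝ) 1, (1 - r^2) * ‖g r‖^2 * r) / δ
      + 4 * δ^2 *
        ∫ r in Ioo (0:ℝ) 1, ‖derivWithin (fun s : ℝ => (s:ℂ) * g s) (Icc (0:ℝ) 1) r‖^2 / r := by
  have hδ1 : δ ≤ 1 := by linarith
  set h : ℝ → ℂ := fun s => (s:ℂ) * g s with hh_def
  set h' : ℝ → ℂ := derivWithin h (Icc (0:ℝ) 1) with hh'_def
  set A : ℝ := ∫ r in Ioo (0:ℝ) 1, (1 - r^2) * ‖g r‖^2 * r with hA_def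
  set B : ℝ := ∫ r in Ioo (0:ℝ) 1, ‖h' r‖^2 / r with hB_def
  -- basic regularity
  have hK : UniqueDiffOn ℝ (Icc (0:ℝ) 1) := uniqueDiffOn_Icc one_pos
  have hh2 : ContDiffOn ℝ 2 h (Icc (0:ℝ) 1) :=
    (Complex.ofRealCLM.contDiff.contDiffOn (s := Icc (0:ℝ) 1)).mul hg
  have hcont_g : ContinuousOn g (Icc (0:ℝ) 1) := hg.continuousOn
  have hcont_h : ContinuousOn h (Icc (0:ℝ) 1) := hh2.continuousOn
  have hdiff : DifferentiableOn ℝ h (Icc (0:ℝ) 1) := hh2.differentiableOn (by norm_num)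
  have hderiv : ∀ t ∈ Icc (0:ℝ) 1, HasDerivWithinAt h (h' t) (Icc (0:ℝ) 1) t :=
    fun t ht => (hdiff t ht).hasDerivWithinAt
  have hcont_h' : ContinuousOn h' (Icc (0:ℝ) 1) :=
    (hh2.derivWithin hK (m := 1) (by norm_num)).continuousOn
  -- norms
  have hnorm_h : ∀ r : ℝ, 0 ≤ r → ‖h r‖^2 = r^2 * ‖g r‖^2 := by
    intro r hr
    rw [hh_def]
    simp only [norm_mul, Complex.norm_real, Real.norm_eq_abs, abs_of_nonneg hr]
    ring
  -- integrability
  have intA : IntegrableOn (fun r => (1 - r^2) * ‖g r‖^2 * r) (Icc (0:ℝ) 1) volume := by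
    apply ContinuousOn.integrableOn_Icc
    exact ((continuousOn_const.sub ((continuous_pow 2).continuousOn)).mul
      (hcont_g.norm.pow 2)).mul continuousOn_id
  have int0 : IntegrableOn (fun r => ‖g r‖^2 * r) (Icc (0:ℝ) 1) volume := by
    apply ContinuousOn.integrableOn_Icc
    exact (hcont_g.norm.pow 2).mul continuousOn_id
  have inth : IntegrableOn (fun r => ‖h r‖^2) (Icc (0:ℝ) 1) volume := by
    apply ContinuousOn.integrableOn_Icc
    exact hcont_h.norm.pow 2
  have inthr : IntegrableOn (fun r => ‖h r‖^2 * r) (Icc (0:ℝ) 1) volume := by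
    apply ContinuousOn.integrableOn_Icc
    exact (hcont_h.norm.pow 2).mul continuousOn_id
  -- nonnegativity of A and B
  have hA0 : 0 ≤ A := by
    apply setIntegral_nonneg measurableSet_Ioo
    intro r hr
    have h1 : (0:ℝ) ≤ 1 - r^2 := by nlinarith [hr.1, hr.2]
    have := hr.1.le
    positivity
  have hB0 : 0 ≤ B := by
    apply setIntegral_nonneg measurableSet_Ioo
    intro r hr
    have := hr.1
    positivity
  -- pointwise bound used twice
  have hpt : ∀ r : ℝ, 0 < r → r ≤ 1 - δ → ‖h r‖^2 ≤ ((1 - r^2) * ‖g r‖^2 * r) / δ := by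
    intro r hr1 hr2
    rw [hnorm_h r hr1.le, le_div_iff₀ hδ0]
    have hg0 : (0:ℝ) ≤ ‖g r‖^2 := by positivity
    have h1 : r * δ ≤ 1 - r^2 := by nlinarith
    nlinarith [mul_le_mul_of_nonneg_left h1 (mul_nonneg hr1.le hg0)]
  -- step: integral of fA over subsets of Ioo 0 1 is ≤ A
  have hfA_nonneg : 0 ≤ᵐ[volume.restrict (Ioo (0:ℝ) 1)]
      fun r => (1 - r^2) * ‖g r‖^2 * r := by
    refine (ae_restrict_mem measurableSet_Ioo).mono fun r hr => ?_
    have h1 : (0:ℝ) ≤ 1 - r^2 := by nlinarith [hr.1, hr.2]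
    have := hr.1.le
    show (0:ℝ) ≤ (1 - r^2) * ‖g r‖^2 * r
    positivity
  have hsubA : ∀ s : Set ℝ, s ⊆ Ioo (0:ℝ) 1 →
      (∫ r in s, (1 - r^2) * ‖g r‖^2 * r) ≤ A := by
    intro s hs
    exact setIntegral_mono_set (intA.mono_set Ioo_subset_Icc_self) hfA_nonneg
      (HasSubset.Subset.eventuallyLE hs)
  -- Step 2 : small ball piece
  have step2 : (∫ r in Ioc (0:ℝ) (1-δ), ‖h r‖^2) ≤ A / δ := by
    have hsub : Ioc (0:ℝ) (1-δ) ⊆ Ioo (0:ℝ) 1 := fun x hx => ⟨hx.1, by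
      have := hx.2; linarith⟩
    calc (∫ r in Ioc (0:ℝ) (1-δ), ‖h r‖^2)
        ≤ ∫ r in Ioc (0:ℝ) (1-δ), ((1 - r^2) * ‖g r‖^2 * r) / δ := by
          apply setIntegral_mono_on
          · exact inth.mono_set (hsub.trans Ioo_subset_Icc_self)
          · exact (intA.mono_set (hsub.trans Ioo_subset_Icc_self)).div_const δ
          · exact measurableSet_Ioc
          · intro r hr
            exact hpt r hr.1 hr.2
      _ = (∫ r in Ioc (0:ℝ) (1-δ), (1 - r^2) * ‖g r‖^2 * r) / δ := integral_div δ _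
      _ ≤ A / δ := by
          gcongr
          exact hsubA _ hsub
  -- Step 3 : minimum point s
  obtain ⟨s, hsmem, hsmin⟩ := isCompact_Icc.exists_isMinOn
    (nonempty_Icc.mpr (by linarith : 1 - 2*δ ≤ 1 - δ))
    ((hcont_h.mono (fun x hx => ⟨by linarith [hx.1], by linarith [hx.2]⟩ :
      Icc (1-2*δ) (1-δ) ⊆ Icc (0:ℝ) 1)).norm)
  have hs1 : 1 - 2*δ ≤ s := hsmem.1
  have hs2 : s ≤ 1 - δ := hsmem.2
  have hs0 : 0 ≤ s := by linarith
  have hhs : ‖h s‖^2 ≤ A / δ^2 := by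
    have hsub : Ioc (1-2*δ) (1-δ) ⊆ Ioo (0:ℝ) 1 := fun x hx =>
      ⟨by linarith [hx.1], by linarith [hx.2]⟩
    have hconst : (∫ _ in Ioc (1-2*δ) (1-δ), ‖h s‖^2) = δ * ‖h s‖^2 := by
      rw [setIntegral_const, Real.volume_real_Ioc, smul_eq_mul,
        max_eq_left (by linarith)]
      ring_nf
    have hmono : (∫ _ in Ioc (1-2*δ) (1-δ), ‖h s‖^2) ≤
        ∫ r in Ioc (1-2*δ) (1-δ), ((1 - r^2) * ‖g r‖^2 * r) / δ := by
      apply setIntegral_mono_on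
      · exact (integrableOn_const_iff).mpr (Or.inr (by rw [Real.volume_Ioc]; exact ENNReal.ofReal_lt_top))
      · exact (intA.mono_set (hsub.trans Ioo_subset_Icc_self)).div_const δ
      · exact measurableSet_Ioc
      · intro r hr
        refine le_trans ?_ (hpt r (by linarith [hr.1]) hr.2)
        have : ‖h s‖ ≤ ‖h r‖ := hsmin ⟨hr.1.le, hr.2⟩
        exact pow_le_pow_left₀ (norm_nonneg _) this 2
    have h2 : (∫ r in Ioc (1-2*δ) (1-δ), ((1 - r^2) * ‖g r‖^2 * r) / δ) ≤ A / δ := by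
      rw [integral_div]
      gcongr
      exact hsubA _ hsub
    have h3 : δ * ‖h s‖^2 ≤ A / δ := by
      rw [← hconst]; exact hmono.trans h2
    rw [le_div_iff₀ (by positivity)]
    calc ‖h s‖^2 * δ^2 = (δ * ‖h s‖^2) * δ := by ring
      _ ≤ (A / δ) * δ := by
          apply mul_le_mul_of_nonneg_right h3 hδ0.le
      _ = A := div_mul_cancel₀ A (ne_of_gt hδ0)
  -- Step 4 : pointwise bound on (1-δ, 1)
  have step4 : ∀ r ∈ Ioo (1-δ) (1:ℝ), ‖h r‖^2 ≤ 2 * (A / δ^2) + 4 * δ * B := by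
    rintro r ⟨hr1, hr2⟩
    have hsr : s ≤ r := by linarith
    have habK : Icc s r ⊆ Icc (0:ℝ) 1 := fun x hx => ⟨by linarith [hx.1], by linarith [hx.2]⟩
    have hintc : IntervalIntegrable h' volume s r := by
      apply ContinuousOn.intervalIntegrable
      rw [uIcc_of_le hsr]
      exact hcont_h'.mono habK
    have ftc : (∫ t in s..r, h' t) = h r - h s := by
      apply intervalIntegral.integral_eq_sub_of_hasDeriv_right_of_le hsr
        (hcont_h.mono habK) ?_ hintc
      intro t ht
      have ht0 : 0 < t := lt_of_le_of_lt hs0 ht.1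
      have ht1 : t < 1 := lt_trans ht.2 hr2
      exact ((hderiv t ⟨ht0.le, ht1.le⟩).hasDerivAt (Icc_mem_nhds ht0 ht1)).hasDerivWithinAt
    set E : ℝ := ∫ t in s..r, ‖h' t‖ with hE_def
    set Q : ℝ := ∫ t in s..r, ‖h' t‖^2 with hQ_def
    have hE0 : 0 ≤ E := intervalIntegral.integral_nonneg hsr (fun u _ => norm_nonneg _)
    have hQ0 : 0 ≤ Q := intervalIntegral.integral_nonneg hsr (fun u _ => by positivity)
    have hintn : IntervalIntegrable (fun t => ‖h' t‖) volume s r := hintc.norm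
    have hintn2 : IntervalIntegrable (fun t => ‖h' t‖^2) volume s r := by
      apply ContinuousOn.intervalIntegrable
      rw [uIcc_of_le hsr]
      exact (hcont_h'.mono habK).norm.pow 2
    have hnorm : ‖h r‖ ≤ ‖h s‖ + E := by
      have h1 : ‖h r - h s‖ ≤ E := by
        rw [← ftc]
        exact intervalIntegral.norm_integral_le_integral_norm hsr
      calc ‖h r‖ = ‖h s + (h r - h s)‖ := by ring_nf
        _ ≤ ‖h s‖ + ‖h r - h s‖ := norm_add_le _ _
        _ ≤ ‖h s‖ + E := by linarith
    -- Cauchy–Schwarz via cs_aux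
    have hcs : E^2 ≤ (r - s) * Q := by
      apply cs_aux hE0 (by linarith) hQ0
      intro l hl
      have hpt2 : ∀ t ∈ Icc s r, 2 * ‖h' t‖ ≤ l + ‖h' t‖^2 / l := by
        intro t _
        rw [← sub_nonneg]
        have : l + ‖h' t‖^2 / l - 2 * ‖h' t‖ = (l - ‖h' t‖)^2 / l := by
          field_simp
          ring
        rw [this]
        positivity
      have hint_rhs : IntervalIntegrable (fun t => l + ‖h' t‖^2 / l) volume s r :=
        (intervalIntegrable_const).add (hintn2.div_const l)
      have h2 : (∫ t in s..r, 2 * ‖h' t‖) ≤ ∫ t in s..r, (l + ‖h' t‖^2 / l) :=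
        intervalIntegral.integral_mono_on hsr (hintn.const_mul 2) hint_rhs hpt2
      have h3 : (∫ t in s..r, 2 * ‖h' t‖) = 2 * E := intervalIntegral.integral_const_mul 2 _
      have h4 : (∫ t in s..r, (l + ‖h' t‖^2 / l)) = (r - s) * l + Q / l := by
        rw [intervalIntegral.integral_add intervalIntegrable_const (hintn2.div_const l),
          intervalIntegral.integral_const, intervalIntegral.integral_div, smul_eq_mul]
      rw [h3, h4] at h2
      exact h2
    have hQB : Q ≤ B := by
      have hsub : Ioo s r ⊆ Ioo (0:ℝ) 1 := fun x hx =>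
        ⟨lt_of_le_of_lt hs0 hx.1, lt_trans hx.2 hr2⟩
      have e1 : Q = ∫ t in Ioo s r, ‖h' t‖^2 := by
        rw [hQ_def, intervalIntegral.integral_of_le hsr, integral_Ioc_eq_integral_Ioo]
      have e2 : (∫ t in Ioo s r, ‖h' t‖^2) ≤ ∫ t in Ioo s r, ‖h' t‖^2 / t := by
        apply setIntegral_mono_on
        · exact (ContinuousOn.integrableOn_Icc (hcont_h'.norm.pow 2)).mono_set
            (hsub.trans Ioo_subset_Icc_self)
        · exact hbInt.mono_set hsub
        · exact measurableSet_Ioo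
        · intro t ht
          have ht0 : 0 < t := lt_of_le_of_lt hs0 ht.1
          have ht1 : t ≤ 1 := le_of_lt (lt_trans ht.2 hr2)
          rw [le_div_iff₀ ht0]
          nlinarith [sq_nonneg ‖h' t‖]
      have e3 : (∫ t in Ioo s r, ‖h' t‖^2 / t) ≤ B := by
        apply setIntegral_mono_set hbInt ?_ (HasSubset.Subset.eventuallyLE hsub)
        refine (ae_restrict_mem measurableSet_Ioo).mono fun t ht => ?_
        have := ht.1
        show (0:ℝ) ≤ ‖h' t‖^2 / t
        positivity
      linarith [e1 ▸ e2]
    have hrs : r - s ≤ 2*δ := by linarith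
    have hE2 : E^2 ≤ 2 * δ * B := by
      calc E^2 ≤ (r - s) * Q := hcs
        _ ≤ 2*δ * B := by
            apply mul_le_mul hrs hQB hQ0 (by linarith)
    have h1 : ‖h r‖^2 ≤ (‖h s‖ + E)^2 := by
      nlinarith [norm_nonneg (h r), norm_nonneg (h s), hE0, hnorm]
    nlinarith [sq_nonneg (‖h s‖ - E), hhs, hE2, h1]
  -- Step 5 : boundary piece
  have step5 : (∫ r in Ioo (1-δ) 1, ‖h r‖^2) ≤ 2 * (A/δ) + 4 * δ^2 * B := by
    have hub : (∫ r in Ioo (1-δ) 1, ‖h r‖^2) ≤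
        ∫ _ in Ioo (1-δ) 1, (2 * (A / δ^2) + 4 * δ * B) := by
      apply setIntegral_mono_on
      · exact inth.mono_set (fun x hx => ⟨by linarith [hx.1], hx.2.le⟩)
      · exact (integrableOn_const_iff).mpr (Or.inr (by rw [Real.volume_Ioo]; exact ENNReal.ofReal_lt_top))
      · exact measurableSet_Ioo
      · exact step4
    have hconst : (∫ _ in Ioo (1-δ) 1, (2 * (A / δ^2) + 4 * δ * B)) =
        δ * (2 * (A / δ^2) + 4 * δ * B) := by
      rw [setIntegral_const, Real.volume_real_Ioo, smul_eq_mul,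
        max_eq_left (by linarith)]
      ring_nf
    have he : δ * (2 * (A / δ^2) + 4 * δ * B) = 2 * (A/δ) + 4 * δ^2 * B := by
      field_simp
    rw [hconst, he] at hub
    exact hub
  -- Combine
  have hsplit : (∫ r in Ioo (0:ℝ) 1, ‖h r‖^2) =
      (∫ r in Ioc (0:ℝ) (1-δ), ‖h r‖^2) + ∫ r in Ioo (1-δ) 1, ‖h r‖^2 := by
    rw [← Ioc_union_Ioo_eq_Ioo (by linarith : (0:ℝ) ≤ 1-δ) (by linarith : 1-δ < 1)]
    apply setIntegral_union
    · rw [Set.disjoint_left]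
      rintro x ⟨_, hx2⟩ ⟨hx3, _⟩
      linarith
    · exact measurableSet_Ioo
    · exact inth.mono_set (fun x hx => ⟨hx.1.le, by linarith [hx.2]⟩)
    · exact inth.mono_set (fun x hx => ⟨by linarith [hx.1], hx.2.le⟩)
  have hLsplit : (∫ r in Ioo (0:ℝ) 1, ‖g r‖^2 * r) =
      A + ∫ r in Ioo (0:ℝ) 1, ‖h r‖^2 * r := by
    rw [hA_def, ← integral_add (intA.mono_set Ioo_subset_Icc_self)
      (inthr.mono_set Ioo_subset_Icc_self)]
    apply setIntegral_congr_fun measurableSet_Ioo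
    intro r hr
    show ‖g r‖^2 * r = (1 - r^2) * ‖g r‖^2 * r + ‖h r‖^2 * r
    rw [hnorm_h r hr.1.le]
    ring
  have hmono1 : (∫ r in Ioo (0:ℝ) 1, ‖h r‖^2 * r) ≤ ∫ r in Ioo (0:ℝ) 1, ‖h r‖^2 := by
    apply setIntegral_mono_on (inthr.mono_set Ioo_subset_Icc_self)
      (inth.mono_set Ioo_subset_Icc_self) measurableSet_Ioo
    intro r hr
    nlinarith [sq_nonneg ‖h r‖, hr.2, hr.1]
  have h3A : 3 * A / δ = 3 * (A/δ) := by ring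
  rw [hLsplit, h3A]
  have := step2
  linarith [hsplit ▸ hmono1, step5, step2]

set_option maxHeartbeats 1000000 in
/-- Weighted interpolation inequality: there is a universal `C > 0` such that
for every C² function `g` on `[0,1]`,
`∫₀¹ |g|² r ≤ C (∫₀¹ (1−r²)|g|² r)^{2/3} (∫₀¹ |(rg)'|²/r)^{1/3} + C ∫₀¹ (1−r²)|g|² r`. -/
theorem stmt5 :
    ∃ C : ℝ, 0 < C ∧ ∀ g : ℝ → ℂ, ContDiffOn ℝ 2 g (Icc (0:ℝ) 1) →
      (∫⁻ r in Ioo (0:ℝ) 1, ENNReal.ofReal (‖g r‖ ^ 2 * r)) ≤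
        ENNReal.ofReal C *
            (∫⁻ r in Ioo (0:ℝ) 1, ENNReal.ofReal ((1 - r ^ 2) * ‖g r‖ ^ 2 * r)) ^ ((2 : ℝ) / 3) *
            (∫⁻ r in Ioo (0:ℝ) 1,
                ENNReal.ofReal
                  (‖derivWithin (fun s : ℝ => (s : ℂ) * g s) (Icc (0:ℝ) 1) r‖ ^ 2 / r)) ^ ((1 : ℝ) / 3)
          + ENNReal.ofReal C *
              ∫⁻ r in Ioo (0:ℝ) 1, ENNReal.ofReal ((1 - r ^ 2) * ‖g r‖ ^ 2 * r) := by
  refine ⟨15, by norm_num, ?_⟩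
  intro g hg
  set h' : ℝ → ℂ := derivWithin (fun s : ℝ => (s:ℂ) * g s) (Icc (0:ℝ) 1) with hh'_def
  have hK : UniqueDiffOn ℝ (Icc (0:ℝ) 1) := uniqueDiffOn_Icc one_pos
  have hh2 : ContDiffOn ℝ 2 (fun s : ℝ => (s:ℂ) * g s) (Icc (0:ℝ) 1) :=
    (Complex.ofRealCLM.contDiff.contDiffOn (s := Icc (0:ℝ) 1)).mul hg
  have hcont_g : ContinuousOn g (Icc (0:ℝ) 1) := hg.continuousOn
  have hcont_h' : ContinuousOn h' (Icc (0:ℝ) 1) :=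
    (hh2.derivWithin hK (m := 1) (by norm_num)).continuousOn
  -- real integrals
  set A : ℝ := ∫ r in Ioo (0:ℝ) 1, (1 - r^2) * ‖g r‖^2 * r with hA_def
  set L : ℝ := ∫ r in Ioo (0:ℝ) 1, ‖g r‖^2 * r with hL_def
  have intA : IntegrableOn (fun r => (1 - r^2) * ‖g r‖^2 * r) (Icc (0:ℝ) 1) volume := by
    apply ContinuousOn.integrableOn_Icc
    exact ((continuousOn_const.sub ((continuous_pow 2).continuousOn)).mul
      (hcont_g.norm.pow 2)).mul continuousOn_id
  have int0 : IntegrableOn (fun r => ‖g r‖^2 * r) (Icc (0:ℝ) 1) volume := by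
    apply ContinuousOn.integrableOn_Icc
    exact (hcont_g.norm.pow 2).mul continuousOn_id
  have hfA_nonneg : 0 ≤ᵐ[volume.restrict (Ioo (0:ℝ) 1)]
      fun r => (1 - r^2) * ‖g r‖^2 * r := by
    refine (ae_restrict_mem measurableSet_Ioo).mono fun r hr => ?_
    have h1 : (0:ℝ) ≤ 1 - r^2 := by nlinarith [hr.1, hr.2]
    have := hr.1.le
    show (0:ℝ) ≤ (1 - r^2) * ‖g r‖^2 * r
    positivity
  have hf0_nonneg : 0 ≤ᵐ[volume.restrict (Ioo (0:ℝ) 1)] fun r => ‖g r‖^2 * r := by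
    refine (ae_restrict_mem measurableSet_Ioo).mono fun r hr => ?_
    have := hr.1.le
    show (0:ℝ) ≤ ‖g r‖^2 * r
    positivity
  have hA0 : 0 ≤ A := setIntegral_nonneg measurableSet_Ioo fun r hr => by
    have h1 : (0:ℝ) ≤ 1 - r^2 := by nlinarith [hr.1, hr.2]
    have := hr.1.le
    positivity
  have hL0 : 0 ≤ L := setIntegral_nonneg measurableSet_Ioo fun r hr => by
    have := hr.1.le
    positivity
  have hAeq : (∫⁻ r in Ioo (0:ℝ) 1, ENNReal.ofReal ((1 - r^2) * ‖g r‖^2 * r)) =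
      ENNReal.ofReal A :=
    (ofReal_integral_eq_lintegral_ofReal (intA.mono_set Ioo_subset_Icc_self) hfA_nonneg).symm
  have hLeq : (∫⁻ r in Ioo (0:ℝ) 1, ENNReal.ofReal (‖g r‖^2 * r)) = ENNReal.ofReal L :=
    (ofReal_integral_eq_lintegral_ofReal (int0.mono_set Ioo_subset_Icc_self) hf0_nonneg).symm
  rw [hAeq, hLeq]
  rcases eq_or_ne (∫⁻ r in Ioo (0:ℝ) 1, ENNReal.ofReal (‖h' r‖^2 / r)) ⊤ with hBtop | hBne
  · -- derivative integral infinite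
    by_cases hAz : A = 0
    · -- then g = 0 a.e. on Ioo 0 1, so LHS = 0
      have hzero : (fun r => (1 - r^2) * ‖g r‖^2 * r)
          =ᵐ[volume.restrict (Ioo (0:ℝ) 1)] 0 :=
        (integral_eq_zero_iff_of_nonneg_ae hfA_nonneg
          (intA.mono_set Ioo_subset_Icc_self)).mp (hA_def ▸ hAz)
      have hzero2 : (fun r => ‖g r‖^2 * r) =ᵐ[volume.restrict (Ioo (0:ℝ) 1)] 0 := by
        filter_upwards [hzero, ae_restrict_mem measurableSet_Ioo] with r h1 h2
        have hr1 : (0:ℝ) < r := h2.1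
        have hr2 : (0:ℝ) < 1 - r^2 := by nlinarith [h2.1, h2.2]
        have hprod : (1 - r^2) * ‖g r‖^2 * r = 0 := h1
        have hgr : ‖g r‖^2 = 0 := by
          by_contra hne
          have hpos : 0 < ‖g r‖^2 := lt_of_le_of_ne (by positivity) (Ne.symm hne)
          nlinarith [mul_pos (mul_pos hr2 hpos) hr1]
        show ‖g r‖^2 * r = 0
        rw [hgr]; ring
      have hLz : L = 0 := by
        rw [hL_def]
        rw [integral_congr_ae hzero2]
        simp
      rw [hLz]
      simp
    · -- A > 0 : right side is ⊤
      rw [hBtop]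
      have h1 : (⊤ : ENNReal) ^ ((1:ℝ)/3) = ⊤ := ENNReal.top_rpow_of_pos (by norm_num)
      rw [h1, ENNReal.mul_top]
      · rw [top_add]
        exact le_top
      · apply mul_ne_zero
        · simp
        · rw [Ne, ENNReal.rpow_eq_zero_iff]
          push_neg
          constructor
          · intro hc
            exact absurd (by simpa [ENNReal.ofReal_eq_zero] using hc)
              (by intro h2; exact hAz (le_antisymm h2 hA0))
          · intro hc
            exact absurd hc ENNReal.ofReal_ne_top
  · -- derivative integral finite : the real case
    set B : ℝ := ∫ r in Ioo (0:ℝ) 1, ‖h' r‖^2 / r with hB_def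
    have hcontB : ContinuousOn (fun r => ‖h' r‖^2 / r) (Ioo (0:ℝ) 1) := by
      apply ContinuousOn.div
      · exact ((hcont_h'.mono Ioo_subset_Icc_self).norm.pow 2)
      · exact continuousOn_id
      · intro x hx
        exact ne_of_gt hx.1
    have haemeas : AEStronglyMeasurable (fun r => ‖h' r‖^2 / r)
        (volume.restrict (Ioo (0:ℝ) 1)) :=
      (hcontB.aemeasurable measurableSet_Ioo).aestronglyMeasurable
    have hBnonneg : 0 ≤ᵐ[volume.restrict (Ioo (0:ℝ) 1)] fun r => ‖h' r‖^2 / r := by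
      refine (ae_restrict_mem measurableSet_Ioo).mono fun r hr => ?_
      have := hr.1
      show (0:ℝ) ≤ ‖h' r‖^2 / r
      positivity
    have hbInt : IntegrableOn (fun r => ‖h' r‖^2 / r) (Ioo (0:ℝ) 1) volume := by
      refine ⟨haemeas, ?_⟩
      rw [hasFiniteIntegral_iff_norm]
      have hcongr : (∫⁻ r in Ioo (0:ℝ) 1, ENNReal.ofReal ‖‖h' r‖^2 / r‖) =
          ∫⁻ r in Ioo (0:ℝ) 1, ENNReal.ofReal (‖h' r‖^2 / r) := by
        apply lintegral_congr_ae
        filter_upwards [hBnonneg] with r hr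
        rw [Real.norm_of_nonneg hr]
      rw [hcongr]
      exact lt_top_iff_ne_top.mpr hBne
    have hBeq : (∫⁻ r in Ioo (0:ℝ) 1, ENNReal.ofReal (‖h' r‖^2 / r)) = ENNReal.ofReal B :=
      (ofReal_integral_eq_lintegral_ofReal hbInt hBnonneg).symm
    have hB0 : 0 ≤ B := setIntegral_nonneg measurableSet_Ioo fun r hr => by
      have := hr.1
      positivity
    rw [hBeq]
    have hkey : L ≤ 15 * A ^ ((2:ℝ)/3) * B ^ ((1:ℝ)/3) + 15 * A := by
      apply arith_aux hA0 hB0 hL0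
      intro δ hδ0 hδ
      exact key_ineq g hg hbInt hδ0 hδ
    calc ENNReal.ofReal L
        ≤ ENNReal.ofReal (15 * A ^ ((2:ℝ)/3) * B ^ ((1:ℝ)/3) + 15 * A) :=
          ENNReal.ofReal_le_ofReal hkey
      _ = ENNReal.ofReal 15 * ENNReal.ofReal A ^ ((2:ℝ)/3) *
            ENNReal.ofReal B ^ ((1:ℝ)/3) + ENNReal.ofReal 15 * ENNReal.ofReal A := by
          rw [ENNReal.ofReal_add (by positivity) (by positivity),
            ENNReal.ofReal_mul (by positivity), ENNReal.ofReal_mul (by norm_num),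
            ENNReal.ofReal_mul (by norm_num),
            ENNReal.ofReal_rpow_of_nonneg hA0 (by norm_num),
            ENNReal.ofReal_rpow_of_nonneg hB0 (by norm_num)]
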